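/- Under the stated assumptions, if 0 < ℓ < ε, then sup_{x ∈ I₀} |b_ℓ(x) − b(x)| ≤ ℓ · ‖b'‖_{∞, I_ε} · ∫_{−∞}^{∞} |y| K(y) dy. -/

import Mathlib

open MeasureTheory

/-- The rescaled kernel `K_η(x) = η⁻¹ K(x/η)`. -/
noncomputable def Kh (K : ℝ → ℝ) (η x : ℝ) : ℝ := η⁻¹ * K (x / η)

open Set intervalIntegral

noncomputable def Hfun (K : ℝ → ℝ) (t : ℝ) : ℝ := ∫ s in t..1, K s

section Kernel
variable {K : ℝ → ℝ} (hK0 : ∀ y, 0 ≤ K y) (hK2 : ContDiff ℝ 2 K)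
  (hKsupp : ∀ y, 1 < |y| → K y = 0) (hKint : ∫ y, K y = 1)

include hK2 hKsupp in
lemma Kinteg : Integrable K := by
  apply (hK2.continuous).integrable_of_hasCompactSupport
  apply HasCompactSupport.of_support_subset_isCompact (isCompact_Icc (a := (-1:ℝ)) (b := 1))
  intro y hy
  simp only [Function.mem_support] at hy
  by_contra h
  simp only [mem_Icc, not_and_or, not_le] at h
  apply hy (hKsupp y ?_)
  rcases h with h | h
  · rw [abs_of_nonpos (by linarith)]; linarith
  · rw [abs_of_pos (by linarith)]; exact h

include hKsupp in
lemma Kzero {s : Set ℝ} (hms : MeasurableSet s) (hs : ∀ y ∈ s, 1 < |y|) :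
    ∫ y in s, K y = 0 := by
  rw [setIntegral_congr_fun hms (g := fun _ => (0:ℝ)) (fun y hy => hKsupp y (hs y hy))]
  simp

include hK2 hKsupp in
lemma H_Ioi (t : ℝ) : ∫ s in Ioi t, K s = Hfun K t := by
  rcases le_or_gt t 1 with h | h
  · rw [← Ioc_union_Ioi_eq_Ioi h,
      setIntegral_union (Ioc_disjoint_Ioi le_rfl) measurableSet_Ioi
        ((Kinteg hK2 hKsupp).integrableOn) ((Kinteg hK2 hKsupp).integrableOn),
      Kzero hKsupp measurableSet_Ioi (fun y hy => by rw [abs_of_pos (by linarith [hy.out])]; exact hy.out),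
      add_zero, Hfun, intervalIntegral.integral_of_le h]
  · rw [Hfun, intervalIntegral.integral_symm, intervalIntegral.integral_of_le h.le,
      Kzero hKsupp measurableSet_Ioc (fun y hy => by rw [abs_of_pos (by linarith [hy.1])]; exact hy.1),
      Kzero hKsupp measurableSet_Ioi (fun y hy => by
        have := hy.out; rw [abs_of_pos (by linarith)]; linarith), neg_zero]

include hK2 hKsupp hKint in
lemma Kint11 : ∫ s in (-1:ℝ)..1, K s = 1 := by
  rw [intervalIntegral.integral_of_le (by norm_num), ← integral_Icc_eq_integral_Ioc,
    setIntegral_eq_integral_of_forall_compl_eq_zero (fun y hy => ?_)]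
  · exact hKint
  simp only [mem_Icc, not_and_or, not_le] at hy
  apply hKsupp
  rcases hy with h | h
  · rw [abs_of_nonpos (by linarith)]; linarith
  · rw [abs_of_pos (by linarith)]; linarith

include hK2 in
lemma H_hasDeriv (t : ℝ) : HasDerivAt (Hfun K) (-K t) t := by
  have h1 : ∀ u, Hfun K u = -(∫ s in (1:ℝ)..u, K s) := fun u => by
    rw [Hfun, intervalIntegral.integral_symm]
  have h2 : HasDerivAt (fun u => ∫ s in (1:ℝ)..u, K s) (K t) t := by
    apply intervalIntegral.integral_hasDerivAt_right
      (hK2.continuous.intervalIntegrable _ _)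
      (hK2.continuous.stronglyMeasurable.stronglyMeasurableAtFilter)
      hK2.continuous.continuousAt
  rw [show Hfun K = fun u => -(∫ s in (1:ℝ)..u, K s) from funext h1]; exact h2.neg

include hK2 in
lemma H_cont : Continuous (Hfun K) := by
  have : Differentiable ℝ (Hfun K) := fun t => (H_hasDeriv hK2 t).differentiableAt
  exact this.continuous

include hK0 hK2 hKsupp in
lemma H_nonneg (t : ℝ) : 0 ≤ Hfun K t := by
  rw [← H_Ioi hK2 hKsupp]
  exact setIntegral_nonneg measurableSet_Ioi (fun y _ => hK0 y)

include hK0 hK2 hKsupp hKint in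
lemma H_le_one (t : ℝ) : Hfun K t ≤ 1 := by
  rw [← H_Ioi hK2 hKsupp, ← hKint]
  exact setIntegral_le_integral (Kinteg hK2 hKsupp) (Filter.Eventually.of_forall hK0)

include hKsupp in
lemma H_of_ge (t : ℝ) (ht : 1 ≤ t) : Hfun K t = 0 := by
  rw [Hfun, intervalIntegral.integral_symm, intervalIntegral.integral_of_le ht,
    Kzero hKsupp measurableSet_Ioc (fun y hy => by rw [abs_of_pos (by linarith [hy.1])]; exact hy.1),
    neg_zero]

include hK2 hKsupp hKint in
lemma H_of_le (t : ℝ) (ht : t ≤ -1) : Hfun K t = 1 := by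
  have := intervalIntegral.integral_add_adjacent_intervals
    (hK2.continuous.intervalIntegrable (μ := volume) t (-1)) (hK2.continuous.intervalIntegrable (μ := volume) (-1) 1)
  rw [Hfun, ← this, Kint11 hK2 hKsupp hKint, intervalIntegral.integral_of_le ht, integral_Ioc_eq_integral_Ioo,
    Kzero hKsupp measurableSet_Ioo (fun y hy => by
      have h2 := hy.2; rw [abs_of_nonpos (by linarith)]; linarith), zero_add]

include hK2 hKsupp in
lemma inner_eq {ℓ : ℝ} (hℓ0 : 0 < ℓ) (c x : ℝ) :
    (∫ y in Iic (-x), Kh K ℓ (-c - y)) = Hfun K ((x - c)/ℓ) := by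
  have step1 : (∫ y in Iic (-x), Kh K ℓ (-c - y)) = ∫ u in Iic (c - x), Kh K ℓ (-u) := by
    have hmp : MeasurePreserving (fun y : ℝ => y + c) volume volume :=
      measurePreserving_add_right volume c
    have hme : MeasurableEmbedding (fun y : ℝ => y + c) :=
      (Homeomorph.addRight c).measurableEmbedding
    have := hmp.setIntegral_preimage_emb hme (fun u => Kh K ℓ (-u)) (Iic (c - x))
    rw [← this]
    have hpre : (fun y : ℝ => y + c) ⁻¹' Iic (c - x) = Iic (-x) := by
      ext y; simp only [mem_preimage, mem_Iic]; constructor <;> intro h <;> linarith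
    rw [hpre]
    congr 1 with y
    ring_nf
  rw [step1, integral_comp_neg_Iic, neg_sub]
  have step3 : (∫ v in Ioi (x - c), Kh K ℓ v) = ∫ s in Ioi ((x - c)/ℓ), K s := by
    simp only [Kh]
    rw [MeasureTheory.integral_const_mul]
    have : ∀ v : ℝ, K (v / ℓ) = K (ℓ⁻¹ * v) := fun v => by rw [div_eq_inv_mul]
    simp_rw [this]
    rw [integral_comp_mul_left_Ioi K _ (inv_pos.mpr hℓ0)]
    rw [smul_eq_mul, inv_inv, ← mul_assoc, inv_mul_cancel₀ hℓ0.ne', one_mul,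
      div_eq_inv_mul]
  rw [step3, ← integral_Ici_eq_integral_Ioi, integral_Ici_eq_integral_Ioi, H_Ioi hK2 hKsupp]

noncomputable def Efun (K : ℝ → ℝ) (t : ℝ) : ℝ := Hfun K t - (if t < 0 then 1 else 0)

lemma Efun_def (K : ℝ → ℝ) (t : ℝ) : Efun K t = Hfun K t - (if t < 0 then 1 else 0) := rfl

lemma step_antitone : Antitone (fun t : ℝ => if t < 0 then (1:ℝ) else 0) := by
  intro s t hst
  by_cases h : t < 0
  · simp [h, if_pos (lt_of_le_of_lt hst h)]
  · by_cases h2 : s < 0 <;> simp [h, h2]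

include hK2 in
lemma Eintegrable (a b : ℝ) : IntervalIntegrable (Efun K) volume a b := by
  have h1 : IntervalIntegrable (Hfun K) volume a b :=
    (H_cont hK2).intervalIntegrable a b
  exact h1.sub (step_antitone.intervalIntegrable)

include hK2 hKsupp in
lemma parts1 : ∫ t in (0:ℝ)..1, Hfun K t = ∫ t in (0:ℝ)..1, t * K t := by
  have hv : ∀ t ∈ uIcc (0:ℝ) 1, HasDerivAt (fun t => -Hfun K t) (K t) t := by
    intro t _; have := (H_hasDeriv hK2 t).neg; rw [neg_neg] at this; exact this
  have hu : ∀ t ∈ uIcc (0:ℝ) 1, HasDerivAt (fun t : ℝ => t) ((fun _ : ℝ => (1:ℝ)) t) t :=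
    fun t _ => hasDerivAt_id t
  have := intervalIntegral.integral_mul_deriv_eq_deriv_mul hu hv
    (intervalIntegrable_const) (hK2.continuous.intervalIntegrable 0 1)
  simp only [H_of_ge hKsupp 1 le_rfl, neg_zero, mul_zero, zero_mul, one_mul,
    zero_sub, mul_neg, intervalIntegral.integral_neg, sub_neg_eq_add, zero_add] at this
  rw [← this]

include hK2 hKsupp hKint in
lemma parts2 : ∫ t in (-1:ℝ)..0, (1 - Hfun K t) = ∫ t in (-1:ℝ)..0, (-t) * K t := by
  have hv : ∀ t ∈ uIcc (-1:ℝ) 0, HasDerivAt (fun t => 1 - Hfun K t) (K t) t := by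
    intro t _; simpa using (H_hasDeriv hK2 t).const_sub 1
  have hu : ∀ t ∈ uIcc (-1:ℝ) 0, HasDerivAt (fun t : ℝ => -t) ((fun _ : ℝ => (-1:ℝ)) t) t :=
    fun t _ => (hasDerivAt_id t).neg
  have := intervalIntegral.integral_mul_deriv_eq_deriv_mul hu hv
    (intervalIntegrable_const) (hK2.continuous.intervalIntegrable (-1) 0)
  simp only [H_of_le hK2 hKsupp hKint (-1) le_rfl, sub_self, mul_zero, neg_zero, zero_mul,
    neg_one_mul, intervalIntegral.integral_neg, neg_neg, zero_sub, sub_neg_eq_add, zero_add] at this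
  rw [this]

include hK0 hK2 hKsupp hKint in
lemma E_bound : ∫ t in (-1:ℝ)..1, |Efun K t| ≤ ∫ y, |y| * K y := by
  have hEabs : ∀ a b : ℝ, IntervalIntegrable (fun t => |Efun K t|) volume a b :=
    fun a b => (Eintegrable hK2 a b).abs
  have hsplit := intervalIntegral.integral_add_adjacent_intervals
    (hEabs (-1) 0) (hEabs 0 1)
  rw [← hsplit]
  have h01 : ∫ t in (0:ℝ)..1, |Efun K t| = ∫ t in (0:ℝ)..1, Hfun K t := by
    apply intervalIntegral.integral_congr
    intro t ht
    rw [uIcc_of_le (by norm_num)] at ht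
    dsimp only; rw [Efun_def, if_neg (not_lt.mpr ht.1), sub_zero, abs_of_nonneg (H_nonneg hK0 hK2 hKsupp t)]
  have hm0 : ∫ t in (-1:ℝ)..0, |Efun K t| = ∫ t in (-1:ℝ)..0, (1 - Hfun K t) := by
    rw [intervalIntegral.integral_of_le (by norm_num : (-1:ℝ) ≤ 0),
      intervalIntegral.integral_of_le (by norm_num : (-1:ℝ) ≤ 0),
      integral_Ioc_eq_integral_Ioo, integral_Ioc_eq_integral_Ioo]
    apply setIntegral_congr_fun measurableSet_Ioo
    intro t ht
    dsimp only; rw [Efun_def, if_pos ht.2, abs_of_nonpos (by linarith [H_le_one hK0 hK2 hKsupp hKint t])]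
    ring
  rw [h01, hm0, parts1 hK2 hKsupp, parts2 hK2 hKsupp hKint]
  have e1 : ∫ t in (0:ℝ)..1, t * K t = ∫ t in (0:ℝ)..1, |t| * K t := by
    apply intervalIntegral.integral_congr
    intro t ht
    rw [uIcc_of_le (by norm_num)] at ht
    dsimp only; rw [abs_of_nonneg ht.1]
  have e2 : ∫ t in (-1:ℝ)..0, (-t) * K t = ∫ t in (-1:ℝ)..0, |t| * K t := by
    apply intervalIntegral.integral_congr
    intro t ht
    rw [uIcc_of_le (by norm_num)] at ht
    dsimp only; rw [abs_of_nonpos ht.2]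
  rw [e1, e2]
  have habsK : Continuous (fun t : ℝ => |t| * K t) := continuous_abs.mul hK2.continuous
  rw [intervalIntegral.integral_add_adjacent_intervals
    (habsK.intervalIntegrable (-1) 0) (habsK.intervalIntegrable 0 1)]
  rw [intervalIntegral.integral_of_le (by norm_num : (-1:ℝ) ≤ 1)]
  apply setIntegral_le_integral
  · apply habsK.integrable_of_hasCompactSupport
    apply HasCompactSupport.of_support_subset_isCompact (isCompact_Icc (a := (-1:ℝ)) (b := 1))
    intro y hy
    simp only [Function.mem_support] at hy
    by_contra h
    simp only [mem_Icc, not_and_or, not_le] at h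
    apply hy
    have : K y = 0 := by
      apply hKsupp
      rcases h with h | h
      · rw [abs_of_nonpos (by linarith)]; linarith
      · rw [abs_of_pos (by linarith)]; exact h
    rw [this, mul_zero]
  · exact Filter.Eventually.of_forall (fun y => mul_nonneg (abs_nonneg y) (hK0 y))

end Kernel

set_option maxHeartbeats 2000000 in
/-- Lemma 5.2: uniform bound on `I₀` for `b_ℓ - b`, where
`b_ℓ(x) = b(r_ε) + ∫_{b(r_ε)}^{b(l_ε)} ∫_{-∞}^{-x} K_ℓ(-b⁻¹(z) - y) dy dz`. -/
theorem stmt6 (l₀ r₀ ε mb : ℝ) (K b b' binv : ℝ → ℝ)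
    (hlr : l₀ < r₀) (hε : 0 < ε) (hε1 : ε ≤ 1) (hmb : 0 < mb)
    -- kernel assumptions
    (hK0 : ∀ y, 0 ≤ K y) (hK2 : ContDiff ℝ 2 K) (hKsymm : ∀ y, K (-y) = K y)
    (hKsupp : ∀ y, 1 < |y| → K y = 0) (hKint : ∫ y, K y = 1)
    -- `b` is continuously differentiable on `I_{2ε}` with `b' ≤ -mb` there
    (hbd : ∀ x ∈ Set.Icc (l₀ - 2 * ε) (r₀ + 2 * ε), HasDerivAt b (b' x) x)
    (hb'c : ContinuousOn b' (Set.Icc (l₀ - 2 * ε) (r₀ + 2 * ε)))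
    (hb'le : ∀ x ∈ Set.Icc (l₀ - 2 * ε) (r₀ + 2 * ε), b' x ≤ -mb)
    -- `binv` is the inverse of `b` on `I_{2ε}`
    (hbinv : ∀ x ∈ Set.Icc (l₀ - 2 * ε) (r₀ + 2 * ε), binv (b x) = x)
    (hbinvmem : ∀ w ∈ Set.Icc (b (r₀ + 2 * ε)) (b (l₀ - 2 * ε)),
      binv w ∈ Set.Icc (l₀ - 2 * ε) (r₀ + 2 * ε) ∧ b (binv w) = w)
    -- the bandwidth condition
    (ℓ : ℝ) (hℓ0 : 0 < ℓ) (hℓ : ℓ < ε) :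
    ∀ x ∈ Set.Icc l₀ r₀,
      |(b (r₀ + ε) +
          ∫ z in (b (r₀ + ε))..(b (l₀ - ε)), ∫ y in Set.Iic (-x), Kh K ℓ (-(binv z) - y))
        - b x| ≤
      ℓ * (⨆ v ∈ Set.Icc (l₀ - ε) (r₀ + ε), |b' v|) * ∫ y, |y| * K y := by
  intro x hx
  obtain ⟨hx1, hx2⟩ := hx
  have hsub : Icc (l₀ - ε) (r₀ + ε) ⊆ Icc (l₀ - 2 * ε) (r₀ + 2 * ε) :=
    Icc_subset_Icc (by linarith) (by linarith)
  have hbc : ContinuousOn b (Icc (l₀ - 2 * ε) (r₀ + 2 * ε)) :=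
    fun w hw => (hbd w hw).continuousAt.continuousWithinAt
  have hanti : StrictAntiOn b (Icc (l₀ - 2 * ε) (r₀ + 2 * ε)) := by
    apply strictAntiOn_of_deriv_neg (convex_Icc _ _) hbc
    intro w hw
    rw [interior_Icc] at hw
    have hw' : w ∈ Icc (l₀ - 2 * ε) (r₀ + 2 * ε) := Ioo_subset_Icc_self hw
    rw [(hbd w hw').deriv]
    linarith [hb'le w hw']
  have hlemem : l₀ - ε ∈ Icc (l₀ - 2 * ε) (r₀ + 2 * ε) := ⟨by linarith, by linarith⟩
  have hremem : r₀ + ε ∈ Icc (l₀ - 2 * ε) (r₀ + 2 * ε) := ⟨by linarith, by linarith⟩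
  have hlt : b (r₀ + ε) ≤ b (l₀ - ε) := (hanti hlemem hremem (by linarith)).le
  -- rewrite inner integral
  simp only [inner_eq hK2 hKsupp hℓ0]
  -- change of variables in the outer integral
  have himg : b '' Icc (l₀ - ε) (r₀ + ε) = Icc (b (r₀ + ε)) (b (l₀ - ε)) := by
    apply Subset.antisymm
    · rintro _ ⟨w, hw, rfl⟩
      exact ⟨hanti.antitoneOn (hsub hw) hremem hw.2, hanti.antitoneOn hlemem (hsub hw) hw.1⟩
    · exact intermediate_value_Icc' (by linarith) (hbc.mono hsub)
  have hchg : (∫ z in (b (r₀ + ε))..(b (l₀ - ε)), Hfun K ((x - binv z) / ℓ))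
      = ∫ w in Icc (l₀ - ε) (r₀ + ε), |b' w| * Hfun K ((x - w) / ℓ) := by
    rw [intervalIntegral.integral_of_le hlt, ← integral_Icc_eq_integral_Ioc, ← himg,
      integral_image_eq_integral_abs_deriv_smul measurableSet_Icc
        (fun w hw => (hbd w (hsub hw)).hasDerivWithinAt) ((hanti.injOn).mono hsub)]
    apply setIntegral_congr_fun measurableSet_Icc
    intro w hw
    dsimp only
    rw [smul_eq_mul, hbinv w (hsub hw)]
  rw [hchg]
  -- FTC for b on [x, r₀ + ε]
  have hxre : uIcc x (r₀ + ε) ⊆ Icc (l₀ - 2 * ε) (r₀ + 2 * ε) := by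
    rw [uIcc_of_le (by linarith)]
    exact Icc_subset_Icc (by linarith) (by linarith)
  have hftc : ∫ w in x..(r₀ + ε), b' w = b (r₀ + ε) - b x :=
    intervalIntegral.integral_eq_sub_of_hasDerivAt (fun w hw => hbd w (hxre hw))
      ((hb'c.mono hxre).intervalIntegrable)
  have habs : ∫ w in Ioc x (r₀ + ε), b' w = -∫ w in Ioc x (r₀ + ε), |b' w| := by
    rw [← MeasureTheory.integral_neg]
    apply setIntegral_congr_fun measurableSet_Ioc
    intro w hw
    dsimp only
    have hwm : w ∈ Icc (l₀ - 2 * ε) (r₀ + 2 * ε) := ⟨by linarith [hw.1], by linarith [hw.2]⟩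
    rw [abs_of_neg (lt_of_le_of_lt (hb'le w hwm) (by linarith))]
    ring
  have hIocsub : Ioc x (r₀ + ε) ⊆ Icc (l₀ - ε) (r₀ + ε) :=
    fun w hw => ⟨by linarith [hw.1], hw.2⟩
  have hind : ∫ w in Ioc x (r₀ + ε), |b' w|
      = ∫ w in Icc (l₀ - ε) (r₀ + ε), (Ioc x (r₀ + ε)).indicator (fun w => |b' w|) w := by
    rw [setIntegral_indicator measurableSet_Ioc, inter_eq_self_of_subset_right hIocsub]
  have hbrebx : b (r₀ + ε) - b x
      = -∫ w in Icc (l₀ - ε) (r₀ + ε), (Ioc x (r₀ + ε)).indicator (fun w => |b' w|) w := by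
    rw [← hind, ← habs, ← hftc, intervalIntegral.integral_of_le (by linarith)]
  -- integrability facts
  have hφc : ContinuousOn (fun w => |b' w|) (Icc (l₀ - ε) (r₀ + ε)) := (hb'c.mono hsub).abs
  have hHcont : Continuous (fun w : ℝ => Hfun K ((x - w) / ℓ)) :=
    (H_cont hK2).comp ((continuous_const.sub continuous_id).div_const ℓ)
  have hI1 : IntegrableOn (fun w => |b' w| * Hfun K ((x - w) / ℓ)) (Icc (l₀ - ε) (r₀ + ε)) :=
    (hφc.mul hHcont.continuousOn).integrableOn_compact isCompact_Icc
  have hφint : IntegrableOn (fun w => |b' w|) (Icc (l₀ - ε) (r₀ + ε)) :=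
    hφc.integrableOn_compact isCompact_Icc
  have hI2 : IntegrableOn ((Ioc x (r₀ + ε)).indicator (fun w => |b' w|))
      (Icc (l₀ - ε) (r₀ + ε)) := hφint.indicator measurableSet_Ioc
  have key : (b (r₀ + ε) + ∫ w in Icc (l₀ - ε) (r₀ + ε), |b' w| * Hfun K ((x - w) / ℓ)) - b x
      = ∫ w in Icc (l₀ - ε) (r₀ + ε),
          (|b' w| * Hfun K ((x - w) / ℓ)
            - (Ioc x (r₀ + ε)).indicator (fun w => |b' w|) w) := by
    rw [integral_sub hI1 hI2]
    have := hbrebx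
    linarith [hbrebx]
  rw [key]
  -- pointwise identification with Efun
  have hEcongr : ∀ w ∈ Icc (l₀ - ε) (r₀ + ε),
      |b' w| * Hfun K ((x - w) / ℓ) - (Ioc x (r₀ + ε)).indicator (fun w => |b' w|) w
        = |b' w| * Efun K ((x - w) / ℓ) := by
    intro w hw
    rw [Efun_def, mul_sub]
    congr 1
    by_cases hwx : x < w
    · rw [indicator_of_mem (mem_Ioc.mpr ⟨hwx, hw.2⟩), if_pos (div_neg_of_neg_of_pos (by linarith) hℓ0), mul_one]
    · rw [indicator_of_notMem (fun hmem => hwx hmem.1),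
        if_neg (not_lt.mpr (div_nonneg (by linarith) hℓ0.le)), mul_zero]
  rw [setIntegral_congr_fun measurableSet_Icc hEcongr]
  -- bound by sup
  have hbdd : BddAbove ((fun v => |b' v|) '' Icc (l₀ - ε) (r₀ + ε)) :=
    (isCompact_Icc.image_of_continuousOn hφc).bddAbove
  set M := ⨆ v ∈ Icc (l₀ - ε) (r₀ + ε), |b' v| with hM
  have houter : BddAbove (Set.range fun v => ⨆ (_ : v ∈ Icc (l₀ - ε) (r₀ + ε)), |b' v|) := by
    refine ⟨(sSup ((fun v => |b' v|) '' Icc (l₀ - ε) (r₀ + ε))) ⊔ 0, ?_⟩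
    rintro _ ⟨v, rfl⟩
    dsimp only
    by_cases hv : v ∈ Icc (l₀ - ε) (r₀ + ε)
    · rw [ciSup_pos hv]
      exact le_sup_of_le_left (le_csSup hbdd (mem_image_of_mem _ hv))
    · haveI : IsEmpty (v ∈ Icc (l₀ - ε) (r₀ + ε)) := ⟨hv⟩
      rw [Real.iSup_of_isEmpty]
      exact le_sup_right
  have hφleM : ∀ w ∈ Icc (l₀ - ε) (r₀ + ε), |b' w| ≤ M := by
    intro w hw
    have h1 : (⨆ (_ : w ∈ Icc (l₀ - ε) (r₀ + ε)), |b' w|) = |b' w| := ciSup_pos hw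
    rw [← h1]
    exact le_ciSup houter w
  have hM0 : 0 ≤ M :=
    le_trans (abs_nonneg (b' l₀)) (hφleM l₀ (mem_Icc.mpr ⟨by linarith, by linarith⟩))
  have habs1 : |∫ w in Icc (l₀ - ε) (r₀ + ε), |b' w| * Efun K ((x - w) / ℓ)|
      ≤ ∫ w in Icc (l₀ - ε) (r₀ + ε), |b' w| * |Efun K ((x - w) / ℓ)| := by
    simpa [Real.norm_eq_abs] using
      MeasureTheory.norm_integral_le_integral_norm (μ := volume.restrict (Icc (l₀ - ε) (r₀ + ε)))
        (f := fun w => |b' w| * Efun K ((x - w) / ℓ))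
  have hEint1 : IntegrableOn (fun w => |b' w| * |Efun K ((x - w) / ℓ)|)
      (Icc (l₀ - ε) (r₀ + ε)) := by
    apply IntegrableOn.congr_fun ((hI1.sub hI2).abs) _ measurableSet_Icc
    intro w hw
    simp only [Pi.sub_apply]
    rw [hEcongr w hw, abs_mul, abs_abs]
  have hstepfun : (fun w : ℝ => if (x - w) / ℓ < 0 then (1:ℝ) else 0)
      = (Ioi x).indicator (fun _ => (1:ℝ)) := by
    funext w
    by_cases h : x < w
    · rw [if_pos (div_neg_of_neg_of_pos (by linarith) hℓ0),
        Set.indicator_of_mem (mem_Ioi.mpr h)]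
    · rw [if_neg (not_lt.mpr (div_nonneg (by linarith) hℓ0.le)),
        Set.indicator_of_notMem (fun hc => h (mem_Ioi.mp hc))]
  have hstepint : IntegrableOn ((Ioi x).indicator (fun _ => (1:ℝ))) (Icc (l₀ - ε) (r₀ + ε)) :=
    (integrableOn_const (C := (1:ℝ)) measure_Icc_lt_top.ne).indicator measurableSet_Ioi
  have hEcompint : IntegrableOn (fun w => |Efun K ((x - w) / ℓ)|) (Icc (l₀ - ε) (r₀ + ε)) := by
    apply IntegrableOn.congr_fun
      (((hHcont.continuousOn.integrableOn_compact isCompact_Icc).sub hstepint).abs)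
      _ measurableSet_Icc
    intro w hw
    have hcf := congrFun hstepfun w
    dsimp only at hcf ⊢
    rw [Pi.sub_apply, Efun_def, ← hcf]
  have hmono : ∫ w in Icc (l₀ - ε) (r₀ + ε), |b' w| * |Efun K ((x - w) / ℓ)|
      ≤ ∫ w in Icc (l₀ - ε) (r₀ + ε), M * |Efun K ((x - w) / ℓ)| := by
    apply setIntegral_mono_on hEint1 (hEcompint.const_mul M) measurableSet_Icc
    intro w hw
    exact mul_le_mul_of_nonneg_right (hφleM w hw) (abs_nonneg _)
  have hpull : ∫ w in Icc (l₀ - ε) (r₀ + ε), M * |Efun K ((x - w) / ℓ)|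
      = M * ∫ w in Icc (l₀ - ε) (r₀ + ε), |Efun K ((x - w) / ℓ)| := integral_const_mul M _
  -- shrink domain to [x - ℓ, x + ℓ]
  have hIccsub : Icc (x - ℓ) (x + ℓ) ⊆ Icc (l₀ - ε) (r₀ + ε) :=
    Icc_subset_Icc (by linarith) (by linarith)
  have hdom : ∫ w in Icc (l₀ - ε) (r₀ + ε), |Efun K ((x - w) / ℓ)|
      = ∫ w in Icc (x - ℓ) (x + ℓ), |Efun K ((x - w) / ℓ)| := by
    conv_rhs => rw [← inter_eq_self_of_subset_right hIccsub]
    rw [← setIntegral_indicator measurableSet_Icc]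
    apply setIntegral_congr_fun measurableSet_Icc
    intro w hw
    by_cases h : w ∈ Icc (x - ℓ) (x + ℓ)
    · rw [indicator_of_mem h]
    · rw [indicator_of_notMem h]
      simp only [mem_Icc, not_and_or, not_le] at h
      dsimp only
      rcases h with h | h
      · rw [Efun_def, H_of_ge hKsupp _ (by rw [le_div_iff₀ hℓ0]; linarith),
          if_neg (not_lt.mpr (div_nonneg (by linarith) hℓ0.le)), sub_zero, abs_zero]
      · rw [Efun_def, H_of_le hK2 hKsupp hKint _ (by rw [div_le_iff₀ hℓ0]; linarith),
          if_pos (div_neg_of_neg_of_pos (by linarith) hℓ0), sub_self, abs_zero]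
  -- affine substitution
  have hsubst : ∫ w in Icc (x - ℓ) (x + ℓ), |Efun K ((x - w) / ℓ)|
      = ℓ * ∫ t in (-1:ℝ)..1, |Efun K t| := by
    rw [integral_Icc_eq_integral_Ioc, ← intervalIntegral.integral_of_le (by linarith)]
    have harg : ∀ w : ℝ, (x - w) / ℓ = -ℓ⁻¹ * w + x / ℓ := fun w => by
      field_simp
      ring
    simp_rw [harg]
    rw [intervalIntegral.integral_comp_mul_add (fun t => |Efun K t|)
      (by simp [hℓ0.ne'] : -ℓ⁻¹ ≠ 0) (x / ℓ)]
    have e1 : -ℓ⁻¹ * (x - ℓ) + x / ℓ = 1 := by field_simp; ring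
    have e2 : -ℓ⁻¹ * (x + ℓ) + x / ℓ = -1 := by field_simp; ring
    rw [e1, e2, intervalIntegral.integral_symm, smul_eq_mul]
    have : (-ℓ⁻¹)⁻¹ = -ℓ := by field_simp
    rw [this]
    ring
  calc |∫ w in Icc (l₀ - ε) (r₀ + ε), |b' w| * Efun K ((x - w) / ℓ)|
      ≤ ∫ w in Icc (l₀ - ε) (r₀ + ε), M * |Efun K ((x - w) / ℓ)| := le_trans habs1 hmono
    _ = M * (ℓ * ∫ t in (-1:ℝ)..1, |Efun K t|) := by rw [hpull, hdom, hsubst]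
    _ ≤ ℓ * M * ∫ y, |y| * K y := by
        have hE := E_bound hK0 hK2 hKsupp hKint
        nlinarith [hE, hM0, hℓ0.le,
          mul_le_mul_of_nonneg_left hE (mul_nonneg hℓ0.le hM0)]
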